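/- Let g : ℕ × ℤ → ℤ be as defined by the iterated-claw recurrence g(n,i) = 20g(n-1,i-1) + 24g(n-2,i-1) - 64g(n-2,i-2) - 384g(n-3,i-3) for n≥3 with the initial values g(0,0)=2, g(0,1)=2, g(1,1)=40, g(1,2)=24, g(2,1)=48, g(2,2)=720, g(2,3)=256 and g vanishing elsewhere for n≤2 and for i<0. Then for every n≥1 and every i with ⌊(n+1)/2⌋ + 1 ≤ i ≤ n, we have g(n,i) > 11·g(n-1,i-1). -/
import Mathlib


theorem stmt5 (g : ℕ × ℤ → ℤ)
    (hneg : ∀ n : ℕ, ∀ i : ℤ, i < 0 → g (n, i) = 0)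
    (h00 : g (0, 0) = 2) (h01 : g (0, 1) = 2)
    (h11 : g (1, 1) = 40) (h12 : g (1, 2) = 24)
    (h21 : g (2, 1) = 48) (h22 : g (2, 2) = 720) (h23 : g (2, 3) = 256)
    (hzero : ∀ n : ℕ, ∀ i : ℤ, n ≤ 2 →
      (n, i) ∉ ({(0, 0), (0, 1), (1, 1), (1, 2), (2, 1), (2, 2), (2, 3)} : Set (ℕ × ℤ)) →
      g (n, i) = 0)
    (hrec : ∀ n : ℕ, ∀ i : ℤ, g (n + 3, i) =
      20 * g (n + 2, i - 1) + 24 * g (n + 1, i - 1) - 64 * g (n + 1, i - 2)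
        - 384 * g (n, i - 3)) :
    ∀ n : ℕ, 1 ≤ n → ∀ i : ℤ,
      ((n : ℤ) + 1) / 2 + 1 ≤ i → i ≤ (n : ℤ) →
      11 * g (n - 1, i - 1) < g (n, i) := by
  -- helper: zero values for small n
  have gval : ∀ (n : ℕ) (i : ℤ), n ≤ 2 → ¬(n = 0 ∧ i = 0) → ¬(n = 0 ∧ i = 1) →
      ¬(n = 1 ∧ i = 1) → ¬(n = 1 ∧ i = 2) → ¬(n = 2 ∧ i = 1) → ¬(n = 2 ∧ i = 2) →
      ¬(n = 2 ∧ i = 3) → g (n, i) = 0 := by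
    intro n i h hA hB hC hD hE hF hG
    apply hzero n i h
    intro hm
    simp only [Set.mem_insert_iff, Set.mem_singleton_iff, Prod.mk.injEq] at hm
    omega
  have key : ∀ n : ℕ,
      (∀ i : ℤ, 2 * i < (n : ℤ) → g (n, i) = 0) ∧
      (∀ i : ℤ, (n : ℤ) + 1 < i → g (n, i) = 0) ∧
      (∀ p : ℕ, ∀ x y : ℤ, Odd n → n = p + 1 → 2 * x = (n : ℤ) + 1 → y = x - 1 →
        0 < g (n, x) ∧ 20 * g (p, y) ≤ g (n, x)) ∧
      (∀ p q : ℕ, ∀ x y z : ℤ, n = p + 1 → p = q + 1 → x = (n : ℤ) + 1 → y = x - 1 →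
        z = x - 2 → g (n, x) = 8 * g (p, y) + 32 * g (q, z)) ∧
      (∀ p : ℕ, ∀ i j : ℤ, n = p + 1 → j = i - 1 → (n : ℤ) + 2 ≤ 2 * i → i ≤ (n : ℤ) →
        11 * g (p, j) < g (n, i)) ∧
      (∀ i : ℤ, 0 ≤ g (n, i)) := by
    intro n
    induction n using Nat.strong_induction_on with
    | _ n ih =>
      match n, ih with
      | 0, _ =>
        refine ⟨?_, ?_, ?_, ?_, ?_, ?_⟩
        · intro i hi
          exact hneg 0 i (by omega)
        · intro i hi
          exact gval 0 i (by omega) (by omega) (by omega) (by omega) (by omega)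
            (by omega) (by omega) (by omega)
        · intro p x y hodd hp hx hy
          obtain ⟨s, hs⟩ := hodd
          exfalso; omega
        · intro p q x y z hp hq hx hy hz
          exfalso; omega
        · intro p i j hp hj hi1 hi2
          exfalso; omega
        · intro i
          rcases eq_or_ne i 0 with rfl | hi0
          · rw [h00]; norm_num
          rcases eq_or_ne i 1 with rfl | hi1
          · rw [h01]; norm_num
          rw [gval 0 i (by omega) (by omega) (by omega) (by omega) (by omega)
            (by omega) (by omega) (by omega)]
      | 1, _ =>
        refine ⟨?_, ?_, ?_, ?_, ?_, ?_⟩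
        · intro i hi
          exact gval 1 i (by omega) (by omega) (by omega) (by omega) (by omega)
            (by omega) (by omega) (by omega)
        · intro i hi
          exact gval 1 i (by omega) (by omega) (by omega) (by omega) (by omega)
            (by omega) (by omega) (by omega)
        · intro p x y hodd hp hx hy
          obtain rfl : p = 0 := by omega
          obtain rfl : x = 1 := by omega
          obtain rfl : y = 0 := by omega
          refine ⟨by rw [h11]; norm_num, by rw [h00, h11]; norm_num⟩
        · intro p q x y z hp hq hx hy hz
          exfalso; omega
        · intro p i j hp hj hi1 hi2
          exfalso; omega
        · intro i
          rcases eq_or_ne i 1 with rfl | hi1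
          · rw [h11]; norm_num
          rcases eq_or_ne i 2 with rfl | hi2
          · rw [h12]; norm_num
          rw [gval 1 i (by omega) (by omega) (by omega) (by omega) (by omega)
            (by omega) (by omega) (by omega)]
      | 2, _ =>
        refine ⟨?_, ?_, ?_, ?_, ?_, ?_⟩
        · intro i hi
          exact gval 2 i (by omega) (by omega) (by omega) (by omega) (by omega)
            (by omega) (by omega) (by omega)
        · intro i hi
          exact gval 2 i (by omega) (by omega) (by omega) (by omega) (by omega)
            (by omega) (by omega) (by omega)
        · intro p x y hodd hp hx hy
          obtain ⟨s, hs⟩ := hodd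
          exfalso; omega
        · intro p q x y z hp hq hx hy hz
          obtain rfl : p = 1 := by omega
          obtain rfl : q = 0 := by omega
          obtain rfl : x = 3 := by omega
          obtain rfl : y = 2 := by omega
          obtain rfl : z = 1 := by omega
          rw [h23, h12, h01]; norm_num
        · intro p i j hp hj hi1 hi2
          obtain rfl : p = 1 := by omega
          obtain rfl : i = 2 := by omega
          obtain rfl : j = 1 := by omega
          rw [h11, h22]; norm_num
        · intro i
          rcases eq_or_ne i 1 with rfl | hi1
          · rw [h21]; norm_num
          rcases eq_or_ne i 2 with rfl | hi2
          · rw [h22]; norm_num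
          rcases eq_or_ne i 3 with rfl | hi3
          · rw [h23]; norm_num
          rw [gval 2 i (by omega) (by omega) (by omega) (by omega) (by omega)
            (by omega) (by omega) (by omega)]
      | (k+3), ih =>
        obtain ⟨Qa, Za, Oa, Ta, Ba, Pa⟩ := ih (k+2) (by omega)
        obtain ⟨Qb, Zb, Ob, Tb, Bb, Pb⟩ := ih (k+1) (by omega)
        obtain ⟨Qc, Zc, Oc, Tc, Bc, Pc⟩ := ih k (by omega)
        -- Q : vanishing below the lower boundary
        have hQ : ∀ i : ℤ, 2 * i < ((k+3 : ℕ) : ℤ) → g (k+3, i) = 0 := by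
          intro i hi
          rw [hrec k i, Qa (i-1) (by omega), Qb (i-1) (by omega), Qb (i-2) (by omega),
            Qc (i-3) (by omega)]
          ring
        -- Z : vanishing above the upper boundary
        have hZ : ∀ i : ℤ, ((k+3 : ℕ) : ℤ) + 1 < i → g (k+3, i) = 0 := by
          intro i hi
          rw [hrec k i, Za (i-1) (by omega), Zb (i-1) (by omega), Zb (i-2) (by omega),
            Zc (i-3) (by omega)]
          ring
        -- O : odd lower-boundary values
        have hO : ∀ p : ℕ, ∀ x y : ℤ, Odd (k+3) → (k+3 : ℕ) = p + 1 →
            2 * x = ((k+3 : ℕ) : ℤ) + 1 → y = x - 1 →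
            0 < g (k+3, x) ∧ 20 * g (p, y) ≤ g (k+3, x) := by
          intro p x y hodd hp hx hy
          obtain rfl : p = k + 2 := by omega
          obtain ⟨s, hs⟩ := hodd
          subst hy
          have hr := hrec k x
          rw [Qb (x-2) (by omega), Qc (x-3) (by omega)] at hr
          have hOb := Ob k (x-1) (x-2) ⟨s-1, by omega⟩ rfl (by omega) (by ring)
          have hPa := Pa (x-1)
          constructor
          · linarith [hOb.1]
          · linarith [hOb.1]
        -- T : top diagonal relation
        have hT : ∀ p q : ℕ, ∀ x y z : ℤ, (k+3 : ℕ) = p + 1 → p = q + 1 →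
            x = ((k+3 : ℕ) : ℤ) + 1 → y = x - 1 → z = x - 2 →
            g (k+3, x) = 8 * g (p, y) + 32 * g (q, z) := by
          intro p q x y z hp hq hx hy hz
          obtain rfl : p = k + 2 := by omega
          obtain rfl : q = k + 1 := by omega
          subst hy; subst hz
          have hr := hrec k x
          rw [Zb (x-1) (by omega)] at hr
          have hTa := Ta (k+1) k (x-1) (x-2) (x-3) rfl rfl (by omega) (by ring) (by ring)
          linarith [hr, hTa]
        -- B : the main inequality
        have hB : ∀ p : ℕ, ∀ i j : ℤ, (k+3 : ℕ) = p + 1 → j = i - 1 →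
            ((k+3 : ℕ) : ℤ) + 2 ≤ 2 * i → i ≤ ((k+3 : ℕ) : ℤ) →
            11 * g (p, j) < g (k+3, i) := by
          intro p i j hp hj hi1 hi2
          obtain rfl : p = k + 2 := by omega
          subst hj
          rw [hrec k i]
          by_cases hsplit : (k : ℤ) + 7 ≤ 2 * i
          · -- generic interior case: two-step chain
            have h1 := Ba (k+1) (i-1) (i-2) (by omega) (by ring) (by omega) (by omega)
            have h2 := Bb k (i-2) (i-3) (by omega) (by ring) (by omega) (by omega)
            have h3 := Pb (i-1)
            have h4 := Pc (i-3)
            linarith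
          · -- boundary case i = c + 1
            rcases Nat.even_or_odd k with ⟨t, ht⟩ | ⟨t, ht⟩
            · -- k even, n = k+3 odd, 2*i = k+6
              have h1 := Ba (k+1) (i-1) (i-2) (by omega) (by ring) (by omega) (by omega)
              have hOb := Ob k (i-2) (i-3) ⟨t, by omega⟩ rfl (by omega) (by ring)
              have hP := Pb (i-1)
              have hD := Pc (i-3)
              linarith [hOb.1, hOb.2]
            · -- k odd, n = k+3 even, 2*i = k+5
              have hOa := Oa (k+1) (i-1) (i-2) ⟨t+1, by omega⟩ rfl (by omega) (by ring)
              have hzD : g (k, i-3) = 0 := Qc (i-3) (by omega)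
              have hP := Pb (i-1)
              rw [hzD]
              linarith [hOa.1, hOa.2]
        -- P : nonnegativity
        have hPos : ∀ i : ℤ, 0 ≤ g (k+3, i) := by
          intro i
          by_cases h1 : 2 * i < ((k+3 : ℕ) : ℤ)
          · rw [hQ i h1]
          by_cases h2 : ((k+3 : ℕ) : ℤ) + 1 < i
          · rw [hZ i h2]
          by_cases hb : i = ((k+3 : ℕ) : ℤ) + 1
          · have := hT (k+2) (k+1) i (i-1) (i-2) rfl rfl hb rfl rfl
            have hy := Pa (i-1)
            have hz := Pb (i-2)
            linarith
          by_cases hmid : ((k+3 : ℕ) : ℤ) + 2 ≤ 2 * i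
          · have := hB (k+2) i (i-1) rfl rfl hmid (by omega)
            have := Pa (i-1)
            linarith
          · -- i = lower boundary
            rcases Nat.even_or_odd k with ⟨t, ht⟩ | ⟨t, ht⟩
            · -- k even, n odd, 2*i = k+4
              have := hO (k+2) i (i-1) ⟨t+1, by omega⟩ rfl (by omega) rfl
              linarith [this.1]
            · -- k odd, n even, 2*i = k+3
              have hr := hrec k i
              rw [Qa (i-1) (by omega), Qb (i-2) (by omega), Qc (i-3) (by omega)] at hr
              have := Pb (i-1)
              linarith [hr]
        exact ⟨hQ, hZ, hO, hT, hB, hPos⟩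
  intro n hn i hlow hhigh
  obtain ⟨-, -, -, -, hB, -⟩ := key n
  exact hB (n-1) i (i-1) (by omega) rfl (by omega) hhigh
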